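/- Let V be a finite-dimensional real vector space (with its canonical topology), let C ⊆ V be a nonempty open convex cone that is pointed in the sense that cl(C) ∩ (−cl(C)) = {0}, and let Γ be a subgroup of the group of linear automorphisms of V such that |det(γ)| = 1 and γ(C) = C for every γ ∈ Γ. Then for every v ∈ C, the closed convex hull of the orbit Γ·v is contained in C. -/

import Mathlib

open Set MeasureTheory Metric Filter
open scoped ENNReal RealInnerProductSpace Topology

section AuxMain
variable {E : Type*} [NormedAddCommGroup E] [InnerProductSpace ℝ E]
  [FiniteDimensional ℝ E] [MeasurableSpace E] [BorelSpace E]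

noncomputable def orbitPhi (μ : Measure E) (C : Set E) (x : E) : ℝ≥0∞ :=
  ∫⁻ y in (ProperCone.innerDual (closure C) : Set E), ENNReal.ofReal (Real.exp (-⟪x, y⟫)) ∂μ

lemma orbitPhi_meas (x : E) : Measurable fun y : E => ENNReal.ofReal (Real.exp (-⟪x, y⟫)) :=
  (ENNReal.continuous_ofReal.comp (Real.continuous_exp.comp
    ((continuous_const.inner continuous_id).neg))).measurable

lemma exp_poly_bound {c : ℝ} (hc : 0 < c) (m : ℕ) :
    ∃ M : ℝ, 0 < M ∧ ∀ t : ℝ, 0 ≤ t → (1 + t) ^ m ≤ M * Real.exp (c * t) := by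
  rcases Nat.eq_zero_or_pos m with hm | hm
  · exact ⟨1, one_pos, fun t ht => by
      simp [hm, Real.one_le_exp_iff, le_of_lt, mul_nonneg hc.le ht,
        Real.one_le_exp (mul_nonneg hc.le ht)]⟩
  · set s := c / m with hs0
    have hm' : (0:ℝ) < m := Nat.cast_pos.2 hm
    have hs : 0 < s := div_pos hc hm'
    refine ⟨(1 + s⁻¹) ^ m, by positivity, fun t ht => ?_⟩
    have h1 : 1 + t ≤ (1 + s⁻¹) * Real.exp (s * t) := by
      have he : 1 + s * t ≤ Real.exp (s * t) := by
        have := Real.add_one_le_exp (s * t); linarith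
      have h3 : s⁻¹ * (s * t) = t := by field_simp
      have h2 : (1:ℝ) + t ≤ (1 + s⁻¹) * (1 + s * t) := by
        have hst : 0 ≤ s * t := mul_nonneg hs.le ht
        have hsi : 0 ≤ s⁻¹ := inv_nonneg.2 hs.le
        nlinarith
      exact h2.trans (mul_le_mul_of_nonneg_left he (by positivity))
    calc (1 + t) ^ m ≤ ((1 + s⁻¹) * Real.exp (s * t)) ^ m :=
          pow_le_pow_left₀ (by positivity) h1 m
      _ = (1 + s⁻¹) ^ m * Real.exp (c * t) := by
          rw [mul_pow, ← Real.exp_nat_mul]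
          congr 2
          rw [hs0]; field_simp
lemma orbitPhi_combo (μ : Measure E) (C : Set E) (x y : E) {a b : ℝ}
    (ha : 0 ≤ a) (hb : 0 ≤ b) (hab : a + b = 1) :
    orbitPhi μ C (a • x + b • y) ≤
      ENNReal.ofReal a * orbitPhi μ C x + ENNReal.ofReal b * orbitPhi μ C y := by
  have hpt : ∀ z : E, ENNReal.ofReal (Real.exp (-⟪a • x + b • y, z⟫)) ≤
      ENNReal.ofReal a * ENNReal.ofReal (Real.exp (-⟪x, z⟫)) +
      ENNReal.ofReal b * ENNReal.ofReal (Real.exp (-⟪y, z⟫)) := by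
    intro z
    have h1 : -⟪a • x + b • y, z⟫ = a * (-⟪x, z⟫) + b * (-⟪y, z⟫) := by
      rw [inner_add_left, real_inner_smul_left, real_inner_smul_left]; ring
    have h2 := convexOn_exp.2 (Set.mem_univ (-⟪x, z⟫)) (Set.mem_univ (-⟪y, z⟫)) ha hb hab
    simp only [smul_eq_mul] at h2
    rw [← ENNReal.ofReal_mul ha, ← ENNReal.ofReal_mul hb,
      ← ENNReal.ofReal_add (by positivity) (by positivity)]
    exact ENNReal.ofReal_le_ofReal (by rw [h1]; exact h2)
  unfold orbitPhi
  calc (∫⁻ z in (ProperCone.innerDual (closure C) : Set E),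
        ENNReal.ofReal (Real.exp (-⟪a • x + b • y, z⟫)) ∂μ)
      ≤ ∫⁻ z in (ProperCone.innerDual (closure C) : Set E),
          (ENNReal.ofReal a * ENNReal.ofReal (Real.exp (-⟪x, z⟫)) +
           ENNReal.ofReal b * ENNReal.ofReal (Real.exp (-⟪y, z⟫))) ∂μ :=
        lintegral_mono fun z => hpt z
    _ = ENNReal.ofReal a * (∫⁻ z in (ProperCone.innerDual (closure C) : Set E),
            ENNReal.ofReal (Real.exp (-⟪x, z⟫)) ∂μ) +
        ENNReal.ofReal b * (∫⁻ z in (ProperCone.innerDual (closure C) : Set E),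
            ENNReal.ofReal (Real.exp (-⟪y, z⟫)) ∂μ) := by
        rw [lintegral_add_left ((orbitPhi_meas x).const_mul _),
          lintegral_const_mul _ (orbitPhi_meas x), lintegral_const_mul _ (orbitPhi_meas y)]

lemma orbitPhi_map (μ : Measure E) [μ.IsAddHaarMeasure] (C : Set E) (v : E)
    (g : E ≃ₗ[ℝ] E) (hdet : |LinearMap.det (g : E →ₗ[ℝ] E)| = 1) (himg : g '' C = C) :
    orbitPhi μ C (g v) = orbitPhi μ C v := by
  set K := closure C with hK
  have hgc : Continuous g := (g : E →ₗ[ℝ] E).continuous_of_finiteDimensional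
  have hgK : g '' K = K := by
    have h1 : g '' closure C = closure (g '' C) := by
      simpa using g.toContinuousLinearEquiv.toHomeomorph.image_closure C
    rw [hK, h1, himg]
  set a : E →ₗ[ℝ] E := LinearMap.adjoint (g : E →ₗ[ℝ] E) with ha
  have hac : Continuous a := a.continuous_of_finiteDimensional
  have hdeta : LinearMap.det a = LinearMap.det (g : E →ₗ[ℝ] E) := by
    let b := stdOrthonormalBasis ℝ E
    rw [← LinearMap.det_toMatrix b.toBasis a, ← LinearMap.det_toMatrix b.toBasis (g : E →ₗ[ℝ] E),
      ha, LinearMap.toMatrix_adjoint, Matrix.det_conjTranspose, star_trivial]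
  have hdet0 : LinearMap.det (g : E →ₗ[ℝ] E) ≠ 0 := by
    intro h; rw [h] at hdet; simp at hdet
  set D := (ProperCone.innerDual K : Set E) with hD
  have hDmeas : MeasurableSet D := (ProperCone.innerDual _).isClosed.measurableSet
  have hpre : a ⁻¹' D = D := by
    ext z
    simp only [Set.mem_preimage, hD, SetLike.mem_coe, ProperCone.mem_innerDual]
    constructor
    · intro h x hx
      have hx' : g.symm x ∈ K := by
        rw [← hgK] at hx
        rcases hx with ⟨x', hx', rfl⟩
        simpa using hx'
      have := h hx'
      rwa [LinearMap.adjoint_inner_right, LinearEquiv.coe_coe, g.apply_symm_apply] at this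
    · intro h x hx
      rw [LinearMap.adjoint_inner_right]
      exact h (hgK ▸ Set.mem_image_of_mem _ hx)
  have hmap : μ.map a = μ := by
    rw [Measure.map_linearMap_addHaar_eq_smul_addHaar μ (hdeta ▸ hdet0)]
    rw [hdeta, abs_inv, hdet]
    norm_num
  have hpt : ∀ y : E, ⟪g v, y⟫ = ⟪v, a y⟫ := fun y => by
    rw [ha, LinearMap.adjoint_inner_right, LinearEquiv.coe_coe]
  calc orbitPhi μ C (g v)
      = ∫⁻ y in D, ENNReal.ofReal (Real.exp (-⟪v, a y⟫)) ∂μ := by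
        refine lintegral_congr fun y => ?_
        rw [hpt y]
    _ = ∫⁻ y in a ⁻¹' D, ENNReal.ofReal (Real.exp (-⟪v, a y⟫)) ∂μ := by rw [hpre]
    _ = ∫⁻ z in D, ENNReal.ofReal (Real.exp (-⟪v, z⟫)) ∂μ := by
        rw [← setLIntegral_map hDmeas (orbitPhi_meas v) hac.measurable, hmap]
    _ = orbitPhi μ C v := rfl

lemma orbitPhi_lt_top (μ : Measure E) [μ.IsAddHaarMeasure] {C : Set E} (hopen : IsOpen C)
    {v : E} (hv : v ∈ C) : orbitPhi μ C v < ∞ := by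
  obtain ⟨r, hr, hball⟩ := Metric.isOpen_iff.1 hopen v hv
  set c := r / 2 with hcdef
  have hc0 : 0 < c := by positivity
  set D := (ProperCone.innerDual (closure C) : Set E) with hD
  have key : ∀ y ∈ D, c * ‖y‖ ≤ ⟪v, y⟫ := by
    intro y hy
    rcases eq_or_ne y 0 with rfl | hy0
    · simp
    · have hyn : (0:ℝ) < ‖y‖ := norm_pos_iff.2 hy0
      have hmem : v - c • (‖y‖⁻¹ • y) ∈ closure C := by
        refine subset_closure (hball ?_)
        rw [mem_ball, dist_self_sub_left, norm_smul, norm_smul, norm_inv, norm_norm]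
        rw [Real.norm_eq_abs, abs_of_pos hc0, inv_mul_cancel₀ hyn.ne', mul_one, hcdef]
        linarith
      have h0 : 0 ≤ ⟪v - c • (‖y‖⁻¹ • y), y⟫ := by
        rw [hD, SetLike.mem_coe, ProperCone.mem_innerDual] at hy
        exact hy hmem
      rw [inner_sub_left, real_inner_smul_left, real_inner_smul_left,
        real_inner_self_eq_norm_mul_norm] at h0
      have : ‖y‖⁻¹ * (‖y‖ * ‖y‖) = ‖y‖ := by field_simp
      nlinarith
  set k : ℕ := Module.finrank ℝ E + 1 with hk
  obtain ⟨M, hM, hMb⟩ := exp_poly_bound hc0 k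
  have hmeas2 : Measurable fun y : E => ENNReal.ofReal (M * (1 + ‖y‖) ^ (-(k:ℝ))) := by
    fun_prop
  have hpt : ∀ y ∈ D, ENNReal.ofReal (Real.exp (-⟪v, y⟫)) ≤
      ENNReal.ofReal (M * (1 + ‖y‖) ^ (-(k:ℝ))) := by
    intro y hy
    apply ENNReal.ofReal_le_ofReal
    have h1 : Real.exp (-⟪v, y⟫) ≤ Real.exp (-(c * ‖y‖)) :=
      Real.exp_le_exp.2 (neg_le_neg (key y hy))
    refine h1.trans ?_
    have hb := hMb ‖y‖ (norm_nonneg y)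
    have hp : (0:ℝ) < (1 + ‖y‖) ^ k := by positivity
    rw [Real.rpow_neg (by positivity), Real.rpow_natCast]
    rw [Real.exp_neg, mul_comm M, ← div_eq_inv_mul, le_div_iff₀ hp]
    have hexp : (0:ℝ) < Real.exp (c * ‖y‖) := Real.exp_pos _
    have h2 : (Real.exp (c * ‖y‖))⁻¹ * (1 + ‖y‖) ^ k ≤
        (Real.exp (c * ‖y‖))⁻¹ * (M * Real.exp (c * ‖y‖)) :=
      mul_le_mul_of_nonneg_left hb (by positivity)
    have h3 : (Real.exp (c * ‖y‖))⁻¹ * (M * Real.exp (c * ‖y‖)) = M := by field_simp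
    linarith
  have hfin : (∫⁻ y : E, ENNReal.ofReal ((1 + ‖y‖) ^ (-(k:ℝ))) ∂μ) < ∞ := by
    apply finite_integral_one_add_norm
    rw [hk]; push_cast; linarith [lt_add_one (Module.finrank ℝ E : ℝ)]
  calc orbitPhi μ C v
      ≤ ∫⁻ y in D, ENNReal.ofReal (M * (1 + ‖y‖) ^ (-(k:ℝ))) ∂μ :=
        setLIntegral_mono hmeas2 hpt
    _ ≤ ∫⁻ y : E, ENNReal.ofReal (M * (1 + ‖y‖) ^ (-(k:ℝ))) ∂μ :=
        setLIntegral_le_lintegral _ _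
    _ = ENNReal.ofReal M * ∫⁻ y : E, ENNReal.ofReal ((1 + ‖y‖) ^ (-(k:ℝ))) ∂μ := by
        rw [← lintegral_const_mul _ (by fun_prop)]
        exact lintegral_congr fun y => by
          rw [← ENNReal.ofReal_mul hM.le]
    _ < ∞ := ENNReal.mul_lt_top ENNReal.ofReal_lt_top hfin

lemma orbitPhi_eq_top (μ : Measure E) [μ.IsAddHaarMeasure] [Nontrivial E] {C : Set E}
    (hne : C.Nonempty) (hopen : IsOpen C) (hconv : Convex ℝ C)
    (hcone : ∀ t : ℝ, 0 < t → ∀ x ∈ C, t • x ∈ C)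
    (hpointed : closure C ∩ (-(closure C)) = {0})
    {w : E} (hwK : w ∈ closure C) (hwC : w ∉ C) :
    orbitPhi μ C w = ∞ := by
  set K := closure C with hKdef
  set D := (ProperCone.innerDual K : Set E) with hDdef
  have hKcl : IsClosed K := isClosed_closure
  have hKne : K.Nonempty := hne.mono subset_closure
  have hKsmul : ∀ t : ℝ, 0 < t → ∀ x ∈ K, t • x ∈ K := by
    intro t ht x hx
    exact map_mem_closure (continuous_const_smul t) hx fun z hz => hcone t ht z hz
  have hCadd : ∀ x ∈ C, ∀ y ∈ C, x + y ∈ C := by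
    intro x hx y hy
    have h1 : (1/2 : ℝ) • x + (1/2 : ℝ) • y ∈ C :=
      hconv hx hy (by norm_num) (by norm_num) (by norm_num)
    have h2 := hcone 2 (by norm_num) _ h1
    rwa [smul_add, smul_smul, smul_smul, show (2:ℝ) * (1/2) = 1 by norm_num, one_smul,
      one_smul] at h2
  have hKadd : ∀ x ∈ K, ∀ y ∈ K, x + y ∈ K := fun x hx y hy =>
    map_mem_closure₂ continuous_add hx hy hCadd
  set Kcone : ConvexCone ℝ E :=
    { carrier := K
      smul_mem' := fun {c} hc {x} hx => hKsmul c hc x hx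
      add_mem' := fun {x} hx {y} hy => hKadd x hx y hy } with hKcone
  -- a strictly positive dual direction for every nonzero element of K
  have sep : ∀ x ∈ K, x ≠ 0 → ∃ y ∈ D, 0 < ⟪x, y⟫ := by
    intro x hx hx0
    have hnx : -x ∉ Kcone := by
      intro h
      have hxm : x ∈ closure C ∩ (-(closure C)) := ⟨hx, Set.mem_neg.2 (show -x ∈ K from h)⟩
      rw [hpointed] at hxm
      exact hx0 hxm
    obtain ⟨y, hy1, hy2⟩ :=
      ProperCone.hyperplane_separation'
        (⟨Kcone.toPointedCone (.of_nonempty_of_isClosed hKne hKcl), hKcl⟩ : ProperCone ℝ E) hnx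
    refine ⟨y, ?_, ?_⟩
    · rw [hDdef, SetLike.mem_coe, ProperCone.mem_innerDual]
      exact fun z hz => hy1 z hz
    · rw [inner_neg_left] at hy2
      linarith
  -- a uniformly positive dual vector u
  set S1 := K ∩ sphere (0:E) 1 with hS1def
  have hS1comp : IsCompact S1 := (isCompact_sphere 0 1).inter_left hKcl
  have hchoice : ∀ p : S1, ∃ y, y ∈ D ∧ 0 < ⟪(p : E), y⟫ := by
    intro p
    have hp1 : ‖(p:E)‖ = 1 := by
      have := p.2.2
      simpa [mem_sphere_iff_norm] using this
    have hp0 : (p : E) ≠ 0 := by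
      intro h; rw [h] at hp1; simp at hp1
    obtain ⟨y, hy, hy2⟩ := sep p p.2.1 hp0
    exact ⟨y, hy, hy2⟩
  choose Y hYD hYpos using hchoice
  have hDnn : ∀ (y) (_ : y ∈ D) (x) (_ : x ∈ K), 0 ≤ ⟪x, y⟫ := by
    intro y hy x hx
    rw [hDdef, SetLike.mem_coe, ProperCone.mem_innerDual] at hy
    exact hy hx
  obtain ⟨t, ht⟩ := hS1comp.elim_finite_subcover (fun p : S1 => {x : E | 0 < ⟪x, Y p⟫})
    (fun p => isOpen_lt continuous_const (continuous_id.inner continuous_const))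
    (fun q hq => Set.mem_iUnion.2 ⟨⟨q, hq⟩, hYpos ⟨q, hq⟩⟩)
  set u : E := ∑ p ∈ t, Y p with hudef
  have huK : ∀ x ∈ K, 0 ≤ ⟪x, u⟫ := by
    intro x hx
    rw [hudef, inner_sum]
    exact Finset.sum_nonneg fun p _ => hDnn _ (hYD p) x hx
  have hupos : ∀ x ∈ S1, 0 < ⟪x, u⟫ := by
    intro x hx
    obtain ⟨p, hpt, hppos⟩ := Set.mem_iUnion₂.1 (ht hx)
    rw [hudef, inner_sum]
    exact Finset.sum_pos' (fun q _ => hDnn _ (hYD q) x hx.1) ⟨p, hpt, hppos⟩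
  have hmin : ∃ c : ℝ, 0 < c ∧ ∀ x ∈ K, c * ‖x‖ ≤ ⟪x, u⟫ := by
    have hsphere_mem : ∀ x ∈ K, x ≠ 0 → ‖x‖⁻¹ • x ∈ S1 := by
      intro x hx hx0
      have hxn : (0:ℝ) < ‖x‖ := norm_pos_iff.2 hx0
      refine ⟨hKsmul _ (inv_pos.2 hxn) x hx, ?_⟩
      simp [mem_sphere_iff_norm, norm_smul, abs_of_pos (inv_pos.2 hxn),
        inv_mul_cancel₀ hxn.ne']
    rcases S1.eq_empty_or_nonempty with hS1e | hS1ne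
    · refine ⟨1, one_pos, fun x hx => ?_⟩
      rcases eq_or_ne x 0 with rfl | hx0
      · simp
      · exact absurd (hsphere_mem x hx hx0) (by rw [hS1e]; simp)
    · obtain ⟨x₀, hx₀, hx₀min⟩ := hS1comp.exists_isMinOn hS1ne
        (f := fun x : E => ⟪x, u⟫) ((continuous_id.inner continuous_const).continuousOn)
      refine ⟨⟪x₀, u⟫, hupos x₀ hx₀, fun x hx => ?_⟩
      rcases eq_or_ne x 0 with rfl | hx0
      · simp
      · have hxn : (0:ℝ) < ‖x‖ := norm_pos_iff.2 hx0
        have h1 := hx₀min (hsphere_mem x hx hx0)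
        simp only [Set.mem_setOf_eq] at h1
        rw [real_inner_smul_left] at h1
        have h2 := mul_le_mul_of_nonneg_left h1 hxn.le
        rw [← mul_assoc, mul_inv_cancel₀ hxn.ne', one_mul, mul_comm] at h2
        exact h2
  obtain ⟨c, hc0, hcK⟩ := hmin
  -- the supporting functional at w
  obtain ⟨f, hf⟩ := geometric_hahn_banach_open_point hconv hopen hwC
  have hfC : ∀ a ∈ C, f a ≤ 0 := by
    intro a ha
    by_contra h
    push_neg at h
    have hT : 0 < (max (f w) 0 + 1) / f a := by positivity
    have h2 := hf _ (hcone _ hT a ha)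
    rw [f.map_smul, smul_eq_mul, div_mul_cancel₀ _ (ne_of_gt h)] at h2
    have := le_max_left (f w) 0
    linarith
  have hfK : ∀ a ∈ K, f a ≤ 0 := fun a ha =>
    closure_minimal (fun z hz => hfC z hz) (isClosed_Iic.preimage f.continuous) ha
  have hfw : f w = 0 := by
    refine le_antisymm (hfK w hwK) ?_
    obtain ⟨a₀, ha₀⟩ := hne
    rcases eq_or_lt_of_le (hfC a₀ ha₀) with heq | hlt
    · have := hf a₀ ha₀; linarith
    · by_contra h
      push_neg at h
      have hT : 0 < f w / (2 * f a₀) := div_pos_of_neg_of_neg h (by linarith)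
      have h2 := hf _ (hcone _ hT a₀ ha₀)
      rw [f.map_smul, smul_eq_mul] at h2
      have h3 : f w / (2 * f a₀) * f a₀ = f w / 2 := by
        field_simp [hlt.ne]
      rw [h3] at h2
      linarith
  set y₀ : E := -((InnerProductSpace.toDual ℝ E).symm f) with hy₀def
  have hy₀inner : ∀ x : E, ⟪x, y₀⟫ = -(f x) := by
    intro x
    rw [hy₀def, inner_neg_right, real_inner_comm, InnerProductSpace.toDual_symm_apply]
  have hy₀K : ∀ x ∈ K, 0 ≤ ⟪x, y₀⟫ := fun x hx => by
    rw [hy₀inner]; linarith [hfK x hx]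
  have hy₀w : ⟪w, y₀⟫ = 0 := by rw [hy₀inner, hfw, neg_zero]
  have hy₀ne : y₀ ≠ 0 := by
    obtain ⟨a₀, ha₀⟩ := hne
    intro h
    have h1 := hy₀inner a₀
    rw [h, inner_zero_right] at h1
    have h2 := hf a₀ ha₀
    rw [hfw] at h2
    linarith
  -- the tube of disjoint balls inside D
  have hy₀norm : (0:ℝ) < ‖y₀‖ := norm_pos_iff.2 hy₀ne
  set c₀ : ℝ := (2 * c + 1) / ‖y₀‖ with hc₀def
  have hc₀pos : 0 < c₀ := by positivity
  set ctr : ℕ → E := fun k => u + (k : ℝ) • (c₀ • y₀) with hctrdef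
  set T : ℕ → Set E := fun k => ball (ctr k) c with hTdef
  have hTD : ∀ k, T k ⊆ D := by
    intro k z hz
    rw [hDdef, SetLike.mem_coe, ProperCone.mem_innerDual]
    intro x hx
    have hlt : ‖z - ctr k‖ ≤ c := by
      rw [← dist_eq_norm]; exact (mem_ball.1 hz).le
    have habs : |⟪x, z - ctr k⟫| ≤ ‖x‖ * ‖z - ctr k‖ := abs_real_inner_le_norm x _
    have h1 : -(‖x‖ * c) ≤ ⟪x, z - ctr k⟫ := by
      nlinarith [neg_abs_le ⟪x, z - ctr k⟫, norm_nonneg x,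
        mul_le_mul_of_nonneg_left hlt (norm_nonneg x)]
    have h2 : ⟪x, ctr k⟫ = ⟪x, u⟫ + (k : ℝ) * c₀ * ⟪x, y₀⟫ := by
      rw [hctrdef]
      simp only [inner_add_right, real_inner_smul_right]
      ring
    have h3 : ⟪x, z⟫ = ⟪x, z - ctr k⟫ + ⟪x, ctr k⟫ := by
      rw [← inner_add_right, sub_add_cancel]
    rw [h3, h2]
    have h4 := hcK x hx
    have h5 : 0 ≤ (k:ℝ) * c₀ * ⟪x, y₀⟫ :=
      mul_nonneg (by positivity) (hy₀K x hx)
    nlinarith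
  have hTbound : ∀ k, ∀ z ∈ T k, ⟪w, z⟫ ≤ ⟪w, u⟫ + ‖w‖ * c := by
    intro k z hz
    have hlt : ‖z - ctr k‖ ≤ c := by
      rw [← dist_eq_norm]; exact (mem_ball.1 hz).le
    have habs : |⟪w, z - ctr k⟫| ≤ ‖w‖ * ‖z - ctr k‖ := abs_real_inner_le_norm w _
    have h2 : ⟪w, ctr k⟫ = ⟪w, u⟫ + (k : ℝ) * c₀ * ⟪w, y₀⟫ := by
      rw [hctrdef]
      simp only [inner_add_right, real_inner_smul_right]
      ring
    have h3 : ⟪w, z⟫ = ⟪w, z - ctr k⟫ + ⟪w, ctr k⟫ := by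
      rw [← inner_add_right, sub_add_cancel]
    rw [h3, h2, hy₀w]
    nlinarith [le_abs_self ⟪w, z - ctr k⟫, norm_nonneg w,
      mul_le_mul_of_nonneg_left hlt (norm_nonneg w)]
  have hTdisj : Pairwise (Function.onFun Disjoint T) := by
    intro k j hkj
    have hsub : ctr k - ctr j = ((k:ℝ) - (j:ℝ)) • (c₀ • y₀) := by
      rw [hctrdef]
      simp only [add_sub_add_left_eq_sub, ← sub_smul]
    have hnormc : ‖c₀ • y₀‖ = 2 * c + 1 := by
      rw [norm_smul, Real.norm_eq_abs, abs_of_pos hc₀pos, hc₀def,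
        div_mul_cancel₀ _ hy₀norm.ne']
    have h1 : (1:ℝ) ≤ |(k:ℝ) - (j:ℝ)| := by
      have hne' : ((k:ℤ) - (j:ℤ)) ≠ 0 := sub_ne_zero.2 (by exact_mod_cast hkj)
      have h := Int.one_le_abs hne'
      have h' : (1:ℝ) ≤ ((|(k:ℤ) - (j:ℤ)| : ℤ) : ℝ) := by exact_mod_cast h
      rwa [Int.cast_abs, Int.cast_sub, Int.cast_natCast, Int.cast_natCast] at h'
    have hdist : c + c ≤ dist (ctr k) (ctr j) := by
      rw [dist_eq_norm, hsub, norm_smul, Real.norm_eq_abs, hnormc]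
      nlinarith
    exact ball_disjoint_ball hdist
  have hμT : ∀ k, μ (T k) = ENNReal.ofReal (c ^ Module.finrank ℝ E) * μ (ball (0:E) 1) :=
    fun k => Measure.addHaar_ball μ _ hc0.le
  have hμTpos : ENNReal.ofReal (c ^ Module.finrank ℝ E) * μ (ball (0:E) 1) ≠ 0 := by
    apply mul_ne_zero
    · simp only [ne_eq, ENNReal.ofReal_eq_zero, not_le]
      positivity
    · exact (measure_ball_pos μ 0 one_pos).ne'
  have hμU : μ (⋃ k, T k) = ∞ := by
    rw [measure_iUnion hTdisj fun k => measurableSet_ball]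
    simp only [hμT]
    exact ENNReal.tsum_const_eq_top_of_ne_zero hμTpos
  have hUD : (⋃ k, T k) ⊆ D := Set.iUnion_subset hTD
  have htop : (∞:ℝ≥0∞) ≤ orbitPhi μ C w := by
    calc (∞:ℝ≥0∞) = ENNReal.ofReal (Real.exp (-(⟪w, u⟫ + ‖w‖ * c))) * μ (⋃ k, T k) := by
          rw [hμU, ENNReal.mul_top]
          simp only [ne_eq, ENNReal.ofReal_eq_zero, not_le]
          exact Real.exp_pos _
      _ = ∫⁻ _ in (⋃ k, T k), ENNReal.ofReal (Real.exp (-(⟪w, u⟫ + ‖w‖ * c))) ∂μ := by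
          rw [setLIntegral_const]
      _ ≤ ∫⁻ z in (⋃ k, T k), ENNReal.ofReal (Real.exp (-⟪w, z⟫)) ∂μ := by
          refine setLIntegral_mono (orbitPhi_meas w) fun z hz => ?_
          apply ENNReal.ofReal_le_ofReal
          apply Real.exp_le_exp.2
          obtain ⟨k, hk⟩ := Set.mem_iUnion.1 hz
          linarith [hTbound k z hk]
      _ ≤ orbitPhi μ C w := lintegral_mono_set hUD
  exact top_unique htop

lemma orbitHull_subset (μ : Measure E) [μ.IsAddHaarMeasure] {C : Set E}
    (hne : C.Nonempty) (hopen : IsOpen C) (hconv : Convex ℝ C)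
    (hcone : ∀ t : ℝ, 0 < t → ∀ x ∈ C, t • x ∈ C)
    (hpointed : closure C ∩ (-(closure C)) = {0})
    {v : E} (hv : v ∈ C) {S : Set E}
    (hS : ∀ p ∈ S, ∃ g : E ≃ₗ[ℝ] E,
      |LinearMap.det (g : E →ₗ[ℝ] E)| = 1 ∧ g '' C = C ∧ g v = p) :
    closure (convexHull ℝ S) ⊆ C := by
  intro w hw
  rcases subsingleton_or_nontrivial E with hE | hE
  · have : w = v := Subsingleton.elim _ _
    rwa [this]
  have hSC : S ⊆ C := by
    intro p hp
    obtain ⟨g, _, hgC, hgv⟩ := hS p hp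
    rw [← hgv, ← hgC]
    exact Set.mem_image_of_mem _ hv
  have hwK : w ∈ closure C := by
    have h1 : convexHull ℝ S ⊆ closure C :=
      convexHull_min (hSC.trans subset_closure) hconv.closure
    exact closure_minimal h1 isClosed_closure hw
  have hsub : convexHull ℝ S ⊆ {x | orbitPhi μ C x ≤ orbitPhi μ C v} := by
    apply convexHull_min
    · intro p hp
      obtain ⟨g, hgdet, hgC, hgv⟩ := hS p hp
      rw [Set.mem_setOf_eq, ← hgv, orbitPhi_map μ C v g hgdet hgC]
    · intro x hx y hy a b ha hb hab
      rw [Set.mem_setOf_eq] at hx hy ⊢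
      calc orbitPhi μ C (a • x + b • y)
          ≤ ENNReal.ofReal a * orbitPhi μ C x + ENNReal.ofReal b * orbitPhi μ C y :=
            orbitPhi_combo μ C x y ha hb hab
        _ ≤ ENNReal.ofReal a * orbitPhi μ C v + ENNReal.ofReal b * orbitPhi μ C v :=
            add_le_add (mul_le_mul_right hx _) (mul_le_mul_right hy _)
        _ = orbitPhi μ C v := by
            rw [← add_mul, ← ENNReal.ofReal_add ha hb, hab, ENNReal.ofReal_one, one_mul]
  obtain ⟨x, hx, hxw⟩ := mem_closure_iff_seq_limit.1 hw
  have hle : orbitPhi μ C w ≤ orbitPhi μ C v := by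
    have h1 : ∀ m, orbitPhi μ C (x m) ≤ orbitPhi μ C v := fun m => hsub (hx m)
    have h2 : orbitPhi μ C w = ∫⁻ y in (ProperCone.innerDual (closure C) : Set E),
        liminf (fun m => ENNReal.ofReal (Real.exp (-⟪x m, y⟫))) atTop ∂μ := by
      refine lintegral_congr fun y => ?_
      have ht : Tendsto (fun m => ENNReal.ofReal (Real.exp (-⟪x m, y⟫))) atTop
          (nhds (ENNReal.ofReal (Real.exp (-⟪w, y⟫)))) := by
        apply (ENNReal.continuous_ofReal.tendsto _).comp
        apply (Real.continuous_exp.tendsto _).comp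
        exact (Filter.Tendsto.inner hxw tendsto_const_nhds).neg
      exact ht.liminf_eq.symm
    calc orbitPhi μ C w
        = ∫⁻ y in (ProperCone.innerDual (closure C) : Set E),
            liminf (fun m => ENNReal.ofReal (Real.exp (-⟪x m, y⟫))) atTop ∂μ := h2
      _ ≤ liminf (fun m => orbitPhi μ C (x m)) atTop :=
          lintegral_liminf_le fun m => orbitPhi_meas (x m)
      _ ≤ liminf (fun _ : ℕ => orbitPhi μ C v) atTop :=
          Filter.liminf_le_liminf (Filter.Eventually.of_forall h1)
      _ = orbitPhi μ C v := Filter.liminf_const _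
  have hfin := orbitPhi_lt_top μ hopen hv
  by_contra hwC
  rw [orbitPhi_eq_top μ hne hopen hconv hcone hpointed hwK hwC] at hle
  exact hfin.ne (top_le_iff.1 hle)

end AuxMain

/-- If `C` is a pointed nonempty open convex cone in a finite-dimensional real vector
space and `Γ` is a group of linear automorphisms with `|det γ| = 1` preserving `C`, then
the closed convex hull of every `Γ`-orbit of a point of `C` is contained in `C`. -/
theorem closed_convexHull_orbit_subset_cone
    {V : Type*} [NormedAddCommGroup V] [NormedSpace ℝ V] [FiniteDimensional ℝ V]
    (C : Set V) (hne : C.Nonempty) (hopen : IsOpen C) (hconv : Convex ℝ C)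
    (hcone : ∀ t : ℝ, 0 < t → ∀ x ∈ C, t • x ∈ C)
    (hpointed : closure C ∩ (-(closure C)) = {0})
    (Γ : Subgroup (V ≃ₗ[ℝ] V))
    (hdet : ∀ γ ∈ Γ, |LinearMap.det (γ : V ≃ₗ[ℝ] V).toLinearMap| = 1)
    (hinv : ∀ γ ∈ Γ, (γ : V ≃ₗ[ℝ] V) '' C = C)
    (v : V) (hv : v ∈ C) :
    closure (convexHull ℝ {w : V | ∃ γ ∈ Γ, (γ : V ≃ₗ[ℝ] V) v = w}) ⊆ C := by
  classical
  set Orb := {w : V | ∃ γ ∈ Γ, (γ : V ≃ₗ[ℝ] V) v = w} with hOrb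
  set L : V ≃ₗ[ℝ] EuclideanSpace ℝ (Fin (Module.finrank ℝ V)) :=
    (toEuclidean (E := V)).toLinearEquiv with hL
  have hLcont : Continuous L := L.toContinuousLinearEquiv.continuous
  have hLhomeo : ∀ s : Set V, (L '' closure s) = closure (L '' s) := fun s => by
    simpa using L.toContinuousLinearEquiv.toHomeomorph.image_closure s
  set μ : Measure (EuclideanSpace ℝ (Fin (Module.finrank ℝ V))) :=
    (Module.finBasis ℝ (EuclideanSpace ℝ (Fin (Module.finrank ℝ V)))).addHaar with hμ
  set C' := L '' C with hC'
  have hne' : C'.Nonempty := hne.image L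
  have hopen' : IsOpen C' :=
    L.toContinuousLinearEquiv.toHomeomorph.isOpenMap _ hopen
  have hconv' : Convex ℝ C' := by
    simpa using hconv.linear_image
      (L : V →ₗ[ℝ] EuclideanSpace ℝ (Fin (Module.finrank ℝ V)))
  have hcone' : ∀ t : ℝ, 0 < t → ∀ x ∈ C', t • x ∈ C' := by
    rintro t ht x ⟨z, hz, rfl⟩
    exact ⟨t • z, hcone t ht z hz, (L.map_smul t z)⟩
  have hnegim : ∀ s : Set V, -(L '' s) = L '' (-s) := by
    intro s
    ext z
    constructor
    · intro hz
      rw [Set.mem_neg] at hz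
      obtain ⟨q, hq, hq2⟩ := hz
      exact ⟨-q, by rwa [Set.mem_neg, neg_neg], by rw [map_neg, hq2, neg_neg]⟩
    · rintro ⟨q, hq, rfl⟩
      rw [Set.mem_neg, ← map_neg]
      exact ⟨-q, by rwa [Set.mem_neg] at hq, rfl⟩
  have hpointed' : closure C' ∩ (-(closure C')) = {0} := by
    rw [hC', ← hLhomeo, hnegim, ← Set.image_inter L.injective, hpointed]
    simp
  have horb : ∀ p ∈ L '' Orb,
      ∃ g : (EuclideanSpace ℝ (Fin (Module.finrank ℝ V))) ≃ₗ[ℝ] _,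
        |LinearMap.det (g : EuclideanSpace ℝ (Fin (Module.finrank ℝ V)) →ₗ[ℝ] _)| = 1 ∧
        g '' C' = C' ∧ g (L v) = p := by
    rintro p ⟨q, ⟨γ, hγ, hγv⟩, rfl⟩
    refine ⟨L.symm.trans ((γ : V ≃ₗ[ℝ] V).trans L), ?_, ?_, ?_⟩
    · have hdeteq : ((L.symm.trans ((γ : V ≃ₗ[ℝ] V).trans L)).toLinearMap) =
          (L : V →ₗ[ℝ] EuclideanSpace ℝ (Fin (Module.finrank ℝ V))) ∘ₗ
            ((γ : V ≃ₗ[ℝ] V) : V →ₗ[ℝ] V) ∘ₗ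
            (L.symm : EuclideanSpace ℝ (Fin (Module.finrank ℝ V)) →ₗ[ℝ] V) :=
        LinearMap.ext fun x => rfl
      rw [hdeteq, LinearMap.det_conj]
      exact hdet γ hγ
    · have : (⇑(L.symm.trans ((γ : V ≃ₗ[ℝ] V).trans L))) '' C' =
          ⇑L '' (⇑(γ : V ≃ₗ[ℝ] V) '' (⇑L.symm '' (⇑L '' C))) := by
        rw [hC']
        simp only [Set.image_image]
        rfl
      rw [this]
      have h2 : (⇑L.symm '' (⇑L '' C)) = C := by
        simp [Set.image_image]
      rw [h2, hinv γ hγ]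
    · show L (γ (L.symm (L v))) = L q
      rw [L.symm_apply_apply, hγv]
  have hmain := orbitHull_subset μ hne' hopen' hconv' hcone' hpointed'
    (Set.mem_image_of_mem L hv) horb
  intro w hw
  have hLw : L w ∈ closure (convexHull ℝ (L '' Orb)) := by
    have h2 : ⇑L '' convexHull ℝ Orb = convexHull ℝ (⇑L '' Orb) := by
      simpa using
        (L : V →ₗ[ℝ] EuclideanSpace ℝ (Fin (Module.finrank ℝ V))).image_convexHull Orb
    rw [← h2, ← hLhomeo]
    exact Set.mem_image_of_mem L hw
  obtain ⟨w', hw', heq⟩ := hmain hLw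
  rwa [← L.injective heq]
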